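/- arXiv:2005.07275 — 2 statements merged into one kernel-verified Lean document; each statement's English description precedes it below -/
import Mathlib

section
/- For the standard normal measure ν = N(0,1) and any differentiable function f such that the expectations exist, E_ν[H_{n+1}(ξ) f(ξ)] = E_ν[Hₙ(ξ) f′(ξ)], where Hₙ is the n-th probabilist's Hermite polynomial. -/
open MeasureTheory Real ProbabilityTheory
open scoped ENNReal NNReal

noncomputable def statPDF : ℝ → ℝ := gaussianPDFReal 0 1

lemma statPDF_eq : statPDF = fun x => (Real.sqrt (2 * π))⁻¹ * Real.exp (-(x ^ 2) / 2) := by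
  funext x
  simp [statPDF, gaussianPDFReal]

lemma statPDF_nonneg (x : ℝ) : 0 ≤ statPDF x := gaussianPDFReal_nonneg 0 1 x

lemma statPDF_measurable : Measurable statPDF := measurable_gaussianPDFReal 0 1

lemma statPDF_continuous : Continuous statPDF := by
  rw [statPDF_eq]
  continuity

lemma gaussianReal_eq_withDensity :
    gaussianReal 0 1 = volume.withDensity (fun x => ((statPDF x).toNNReal : ℝ≥0∞)) := by
  rw [gaussianReal_of_var_ne_zero 0 one_ne_zero]
  rfl

lemma integrable_gaussian_iff (g : ℝ → ℝ) :
    Integrable g (gaussianReal 0 1) ↔ Integrable (fun x => statPDF x * g x) volume := by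
  rw [gaussianReal_eq_withDensity,
    integrable_withDensity_iff_integrable_coe_smul statPDF_measurable.real_toNNReal]
  refine integrable_congr (Filter.Eventually.of_forall fun x => ?_)
  simp [NNReal.smul_def, Real.coe_toNNReal _ (statPDF_nonneg x)]

lemma integral_gaussian_eq (g : ℝ → ℝ) :
    ∫ x, g x ∂(gaussianReal 0 1) = ∫ x, statPDF x * g x := by
  rw [gaussianReal_eq_withDensity,
    integral_withDensity_eq_integral_smul statPDF_measurable.real_toNNReal]
  refine integral_congr_ae (Filter.Eventually.of_forall fun x => ?_)
  simp [NNReal.smul_def, Real.coe_toNNReal _ (statPDF_nonneg x)]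

lemma statPDF_hasDerivAt (x : ℝ) : HasDerivAt statPDF (-x * statPDF x) x := by
  have h1 : HasDerivAt (fun y : ℝ => -(y ^ 2) / 2) (-x) x := by
    have := ((hasDerivAt_pow 2 x).neg).div_const (2 : ℝ)
    refine this.congr_deriv ?_
    norm_num
    ring
  have h2 := (h1.exp).const_mul ((Real.sqrt (2 * π))⁻¹)
  rw [statPDF_eq]
  refine h2.congr_deriv ?_
  ring

/-- continuous function with integrable `x • g` is integrable -/
lemma integrable_of_integrable_mul_id {g : ℝ → ℝ} (hg : Continuous g)
    (h : Integrable (fun x => x * g x) volume) : Integrable g volume := by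
  rw [← integrableOn_univ]
  have hsub : (Set.univ : Set ℝ) ⊆ Set.Icc (-1) 1 ∪ {x : ℝ | 1 ≤ |x|} := by
    intro x _
    rcases le_or_gt (|x|) 1 with hx | hx
    · exact Or.inl ⟨(abs_le.mp hx).1, (abs_le.mp hx).2⟩
    · exact Or.inr hx.le
  refine IntegrableOn.mono_set ?_ hsub
  refine IntegrableOn.union ?_ ?_
  · exact hg.integrableOn_Icc
  · have hmeas : MeasurableSet {x : ℝ | 1 ≤ |x|} :=
      measurableSet_le measurable_const measurable_id.abs
    refine Integrable.mono' (h.norm.integrableOn) hg.aestronglyMeasurable.restrict ?_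
    filter_upwards [ae_restrict_mem hmeas] with x hx
    rw [Real.norm_eq_abs, Real.norm_eq_abs, abs_mul]
    exact le_mul_of_one_le_left (abs_nonneg _) hx

/-- Stein's lemma core: integration by parts against the Gaussian density. -/
lemma stein_core (g g' : ℝ → ℝ) (hg : ∀ x, HasDerivAt g (g' x) x)
    (hxg : Integrable (fun x => statPDF x * (x * g x)) volume)
    (hg' : Integrable (fun x => statPDF x * g' x) volume)
    (hgi : Integrable (fun x => statPDF x * g x) volume) :
    ∫ x, statPDF x * g' x = ∫ x, statPDF x * (x * g x) := by
  have h := integral_mul_deriv_eq_deriv_mul_of_integrable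
    (u := statPDF) (u' := fun x => -x * statPDF x) (v := g) (v' := g')
    (fun x _ => statPDF_hasDerivAt x) (fun x _ => hg x) hg' ?_ ?_
  · rw [h, ← integral_neg]
    refine integral_congr_ae (Filter.Eventually.of_forall fun x => ?_)
    ring
  · show Integrable ((fun x => -x * statPDF x) * g) volume
    rw [Pi.mul_def,
      show (fun x => (-x * statPDF x) * g x) = fun x => -(statPDF x * (x * g x)) from by
        funext x; ring]
    exact hxg.neg
  · exact hgi


open MeasureTheory Real ProbabilityTheory

/-- **Hermite–Stein lemma.**  For the standard normal measure `ν = N(0,1)` and any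
differentiable function `f` such that the relevant expectations exist,
`E_ν[H_{n+1}(ξ) f(ξ)] = E_ν[Hₙ(ξ) f′(ξ)]`, where `Hₙ` is the `n`-th probabilist's
Hermite polynomial. -/
theorem hermite_stein (n : ℕ) (f : ℝ → ℝ) (hf : Differentiable ℝ f)
    (h₁ : Integrable (fun x => (Polynomial.aeval x (Polynomial.hermite (n + 1)) : ℝ) * f x)
      (gaussianReal 0 1))
    (h₂ : Integrable (fun x => (Polynomial.aeval x (Polynomial.hermite n) : ℝ) * deriv f x)
      (gaussianReal 0 1))
    (h₃ : Integrable (fun x => x * (Polynomial.aeval x (Polynomial.hermite n) : ℝ) * f x)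
      (gaussianReal 0 1)) :
    ∫ x, (Polynomial.aeval x (Polynomial.hermite (n + 1)) : ℝ) * f x ∂(gaussianReal 0 1) =
      ∫ x, (Polynomial.aeval x (Polynomial.hermite n) : ℝ) * deriv f x ∂(gaussianReal 0 1) := by
  set H : ℝ → ℝ := fun x => (Polynomial.aeval x (Polynomial.hermite n) : ℝ) with hH
  set Hd : ℝ → ℝ := fun x => (Polynomial.aeval x (Polynomial.derivative (Polynomial.hermite n)) : ℝ)
    with hHd
  have hrec : ∀ x : ℝ, (Polynomial.aeval x (Polynomial.hermite (n + 1)) : ℝ)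
      = x * H x - Hd x := by
    intro x
    rw [Polynomial.hermite_succ]
    simp [hH, hHd]
  -- transfer integrability to Lebesgue measure
  have h₁' : Integrable (fun x => statPDF x *
      ((Polynomial.aeval x (Polynomial.hermite (n + 1)) : ℝ) * f x)) volume :=
    (integrable_gaussian_iff _).mp h₁
  have h₂' : Integrable (fun x => statPDF x * (H x * deriv f x)) volume :=
    (integrable_gaussian_iff _).mp h₂
  have h₃' : Integrable (fun x => statPDF x * (x * H x * f x)) volume :=
    (integrable_gaussian_iff _).mp h₃
  have hgd' : Integrable (fun x => statPDF x * (Hd x * f x)) volume := by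
    refine (h₃'.sub h₁').congr (Filter.Eventually.of_forall fun x => ?_)
    simp only [Pi.sub_apply]
    rw [hrec x]; ring
  -- the derivative of g = H * f
  have hg : ∀ x, HasDerivAt (fun y => H y * f y) (Hd x * f x + H x * deriv f x) x := by
    intro x
    exact ((Polynomial.hermite n).hasDerivAt_aeval x).mul (hf x).hasDerivAt
  have hgcont : Continuous fun x => statPDF x * (H x * f x) :=
    statPDF_continuous.mul ((Polynomial.continuous_aeval (Polynomial.hermite n)).mul hf.continuous)
  have hgi : Integrable (fun x => statPDF x * (H x * f x)) volume := by
    refine integrable_of_integrable_mul_id hgcont ?_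
    refine h₃'.congr (Filter.Eventually.of_forall fun x => ?_)
    ring
  have hxg : Integrable (fun x => statPDF x * (x * (H x * f x))) volume := by
    refine h₃'.congr (Filter.Eventually.of_forall fun x => ?_)
    ring
  have hg'i : Integrable (fun x => statPDF x * (Hd x * f x + H x * deriv f x)) volume := by
    refine (hgd'.add h₂').congr (Filter.Eventually.of_forall fun x => ?_)
    simp only [Pi.add_apply]
    ring
  have hstein := stein_core (fun y => H y * f y) (fun y => Hd y * f y + H y * deriv f y)
    hg hxg hg'i hgi
  have e1 : ∫ x, statPDF x * (Hd x * f x + H x * deriv f x)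
      = (∫ x, statPDF x * (Hd x * f x)) + ∫ x, statPDF x * (H x * deriv f x) := by
    rw [← integral_add hgd' h₂']
    refine integral_congr_ae (Filter.Eventually.of_forall fun x => ?_)
    ring
  have e2 : ∫ x, statPDF x * (x * (H x * f x)) = ∫ x, statPDF x * (x * H x * f x) := by
    refine integral_congr_ae (Filter.Eventually.of_forall fun x => ?_)
    ring
  have e3 : ∫ x, statPDF x * ((Polynomial.aeval x (Polynomial.hermite (n + 1)) : ℝ) * f x)
      = (∫ x, statPDF x * (x * H x * f x)) - ∫ x, statPDF x * (Hd x * f x) := by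
    rw [← integral_sub h₃' hgd']
    refine integral_congr_ae (Filter.Eventually.of_forall fun x => ?_)
    simp only [Pi.sub_apply]
    rw [hrec x]; ring
  rw [integral_gaussian_eq, integral_gaussian_eq, e3]
  rw [e1, e2] at hstein
  linarith
end

section
/- The Fourier coefficient of p = c·exp(-φ) ∈ B² with respect to the n-th exponentiated Hermite basis vector under standard normal measure is αₙ = ⟨hₙ, p⟩ = (1/√(n!))·E_ν[φ^{(n)}(ξ)], the scaled expectation of the n-th derivative of φ. -/
open MeasureTheory Real ProbabilityTheory

/-- The Bayes-space inner product `⟨p₁,p₂⟩ = E_ν[ln p₁ ln p₂] − E_ν[ln p₁]E_ν[ln p₂]`. -/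
noncomputable def bip (ν : Measure ℝ) (p q : ℝ → ℝ) : ℝ :=
  (∫ x, Real.log (p x) * Real.log (q x) ∂ν) -
    (∫ x, Real.log (p x) ∂ν) * (∫ x, Real.log (q x) ∂ν)

/-- The exponentiated normalized probabilist's Hermite basis vector
`hₙ(ξ) = exp (-Hₙ(ξ)/√(n!))`. -/
noncomputable def hermiteBasis (n : ℕ) (x : ℝ) : ℝ :=
  Real.exp (-(Polynomial.aeval x (Polynomial.hermite n) / Real.sqrt (Nat.factorial n)))

section HermiteFourierAux

open Set Filter Polynomial
open scoped ENNReal NNReal Topology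






noncomputable section BayesAux

/-- Hermite polynomial as a real function. -/
def Hp (k : ℕ) (x : ℝ) : ℝ := Polynomial.aeval x (Polynomial.hermite k)

/-- Standard normal density. -/
def gpdf (x : ℝ) : ℝ := gaussianPDFReal 0 1 x

lemma gpdf_eq (x : ℝ) : gpdf x = (Real.sqrt (2 * π))⁻¹ * Real.exp (-(x ^ 2 / 2)) := by
  unfold gpdf gaussianPDFReal
  norm_num [neg_div]

lemma gpdf_pos (x : ℝ) : 0 < gpdf x := gaussianPDFReal_pos 0 1 x one_ne_zero

lemma continuous_gpdf : Continuous gpdf := by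
  have : gpdf = fun x => (Real.sqrt (2 * π))⁻¹ * Real.exp (-(x ^ 2 / 2)) := funext gpdf_eq
  rw [this]; continuity

lemma integrable_gpdf : Integrable gpdf := integrable_gaussianPDFReal 0 1

lemma hasDerivAt_neg_sq (x : ℝ) : HasDerivAt (fun y : ℝ => -(y ^ 2 / 2)) (-x) x := by
  simpa using ((hasDerivAt_pow 2 x).div_const 2).fun_neg

lemma hasDerivAt_gpdf (x : ℝ) : HasDerivAt gpdf (-x * gpdf x) x := by
  have h : HasDerivAt (fun y : ℝ => (Real.sqrt (2 * π))⁻¹ * Real.exp (-(y ^ 2 / 2)))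
      ((Real.sqrt (2 * π))⁻¹ * (Real.exp (-(x ^ 2 / 2)) * (-x))) x :=
    ((hasDerivAt_neg_sq x).exp).const_mul _
  have hfun : gpdf = fun y => (Real.sqrt (2 * π))⁻¹ * Real.exp (-(y ^ 2 / 2)) := funext gpdf_eq
  rw [hfun]
  convert h using 1
  ring

lemma gauss_integrable_iff (f : ℝ → ℝ) :
    Integrable f (gaussianReal 0 1) ↔ Integrable (fun x => f x * gpdf x) volume := by
  rw [gaussianReal_of_var_ne_zero 0 one_ne_zero]
  have hd : volume.withDensity (gaussianPDF 0 1)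
      = volume.withDensity (fun x => ((gaussianPDFReal 0 1 x).toNNReal : ℝ≥0∞)) := rfl
  rw [hd, integrable_withDensity_iff_integrable_smul
    ((measurable_gaussianPDFReal 0 1).real_toNNReal)]
  have : (fun x => (gaussianPDFReal 0 1 x).toNNReal • f x) = fun x => f x * gpdf x := by
    funext x
    simp [NNReal.smul_def, Real.coe_toNNReal _ (gaussianPDFReal_nonneg 0 1 x), gpdf, mul_comm]
  rw [this]

lemma gauss_integral_eq (f : ℝ → ℝ) :
    ∫ x, f x ∂(gaussianReal 0 1) = ∫ x, f x * gpdf x := by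
  rw [gaussianReal_of_var_ne_zero 0 one_ne_zero]
  have hd : volume.withDensity (gaussianPDF 0 1)
      = volume.withDensity (fun x => ((gaussianPDFReal 0 1 x).toNNReal : ℝ≥0∞)) := rfl
  rw [hd, integral_withDensity_eq_integral_smul
    ((measurable_gaussianPDFReal 0 1).real_toNNReal)]
  congr 1
  funext x
  simp [NNReal.smul_def, Real.coe_toNNReal _ (gaussianPDFReal_nonneg 0 1 x), gpdf, mul_comm]

lemma iteratedDeriv_const_fun (k : ℕ) (c : ℝ) :
    iteratedDeriv (k + 1) (fun _ : ℝ => c) = fun _ => 0 := by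
  induction k with
  | zero => funext x; simp [iteratedDeriv_one]
  | succ m ih => rw [iteratedDeriv_succ, ih]; funext x; simp


lemma derivative_hermite' (k : ℕ) :
    Polynomial.derivative (Polynomial.hermite (k + 1)) = (k + 1) • Polynomial.hermite k := by
  induction k with
  | zero => simp [Polynomial.hermite_one, Polynomial.hermite_zero]
  | succ m ih =>
    rw [Polynomial.hermite_succ (m + 1), Polynomial.derivative_sub, Polynomial.derivative_mul,
      Polynomial.derivative_X, one_mul, ih, Polynomial.derivative_smul, mul_smul_comm,
      add_sub_assoc, ← smul_sub, ← Polynomial.hermite_succ m, show m+1+1 = m+2 from rfl]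
    simp only [add_nsmul, one_nsmul, two_nsmul]
    abel

lemma aeval_derivative_hermite (m : ℕ) (x : ℝ) :
    Polynomial.aeval x (Polynomial.derivative (Polynomial.hermite m)) = (m : ℝ) * Hp (m - 1) x := by
  cases m with
  | zero => simp [Polynomial.hermite_zero]
  | succ k => rw [derivative_hermite']; simp [Hp, nsmul_eq_mul]

lemma hasDerivAt_Hp (m : ℕ) (x : ℝ) :
    HasDerivAt (fun y => Hp m y) ((m : ℝ) * Hp (m - 1) x) x := by
  have := Polynomial.hasDerivAt_aeval (q := Polynomial.hermite m) x
  rwa [aeval_derivative_hermite] at this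

lemma continuous_Hp (m : ℕ) : Continuous (fun y => Hp m y) :=
  continuous_iff_continuousAt.2 fun x => (hasDerivAt_Hp m x).continuousAt

lemma Hp_succ_eval (k : ℕ) (x : ℝ) :
    Hp (k + 1) x = x * Hp k x - (k : ℝ) * Hp (k - 1) x := by
  unfold Hp
  rw [Polynomial.hermite_succ, map_sub, map_mul, Polynomial.aeval_X, aeval_derivative_hermite]
  rfl

lemma Hp_zero (x : ℝ) : Hp 0 x = 1 := by simp [Hp, Polynomial.hermite_zero]


lemma aux_Ioi (g u : ℝ → ℝ) (hu_cont : Continuous u)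
    (hg : ∀ x, HasDerivAt g (u x - x * g x) x) (hu : Integrable u) :
    IntegrableOn (fun x => x * g x) (Ioi (0:ℝ)) := by
  have hgc : Continuous g := continuous_iff_continuousAt.2 fun x => (hg x).continuousAt
  set E : ℝ → ℝ := fun x => Real.exp (x ^ 2 / 2) with hE
  have hEc : Continuous E := Real.continuous_exp.comp (by continuity)
  have hEd : ∀ x : ℝ, HasDerivAt E (x * E x) x := by
    intro x
    have h0 : HasDerivAt (fun y : ℝ => y ^ 2 / 2) x x := by
      simpa using (hasDerivAt_pow 2 x).div_const 2
    simpa [hE, mul_comm] using h0.exp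
  have hEg : ∀ x, HasDerivAt (fun y => E y * g y) (E x * u x) x := by
    intro x
    have h1 := (hEd x).fun_mul (hg x)
    refine h1.congr_deriv ?_
    ring
  have rep : ∀ x : ℝ, g x = Real.exp (-(x ^ 2 / 2)) * (g 0 + ∫ t in (0:ℝ)..x, E t * u t) := by
    intro x
    have hint : IntervalIntegrable (fun t => E t * u t) volume 0 x :=
      (hEc.mul hu_cont).intervalIntegrable 0 x
    have h2 := intervalIntegral.integral_eq_sub_of_hasDerivAt (fun y _ => hEg y) hint
    have hE0 : E 0 = 1 := by simp [hE]
    have hExne : E x ≠ 0 := Real.exp_ne_zero _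
    have hinv : Real.exp (-(x ^ 2 / 2)) = (E x)⁻¹ := by rw [hE, Real.exp_neg]
    rw [h2, hE0, hinv]
    field_simp
    ring
  have hc2 : Continuous (fun x : ℝ => Real.exp (-(x ^ 2 / 2))) :=
    Real.continuous_exp.comp (continuous_neg.comp ((continuous_pow 2).div_const 2))
  set A : ℝ → ℝ := fun x => ∫ t in (0:ℝ)..x, E t * |u t| with hA
  have hAd : ∀ x, HasDerivAt A (E x * |u x|) x := fun x =>
    ((hEc.mul hu_cont.abs).integral_hasStrictDerivAt 0 x).hasDerivAt
  have hAc : Continuous A := continuous_iff_continuousAt.2 fun x => (hAd x).continuousAt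
  have hA0 : A 0 = 0 := by simp [hA]
  have hAnn : ∀ x : ℝ, 0 ≤ x → 0 ≤ A x := fun x hx =>
    intervalIntegral.integral_nonneg hx fun t _ => mul_nonneg (Real.exp_pos _).le (abs_nonneg _)
  set B : ℝ → ℝ := fun x => x * Real.exp (-(x ^ 2 / 2)) * (|g 0| + A x) with hB
  have hbound : ∀ x ∈ Ioi (0:ℝ), ‖x * g x‖ ≤ B x := by
    intro x hx
    have hx0 : (0:ℝ) ≤ x := le_of_lt hx
    have h1 : |∫ t in (0:ℝ)..x, E t * u t| ≤ A x := by
      have h3 := intervalIntegral.abs_integral_le_integral_abs (f := fun t => E t * u t)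
        (μ := volume) hx0
      simpa [hA, hE, abs_mul, abs_of_pos (Real.exp_pos _)] using h3
    have h2 : |g x| ≤ Real.exp (-(x ^ 2 / 2)) * (|g 0| + A x) := by
      rw [rep x, abs_mul, abs_of_pos (Real.exp_pos _)]
      refine mul_le_mul_of_nonneg_left ?_ (Real.exp_pos _).le
      calc |g 0 + ∫ t in (0:ℝ)..x, E t * u t|
          ≤ |g 0| + |∫ t in (0:ℝ)..x, E t * u t| := abs_add_le _ _
        _ ≤ |g 0| + A x := by linarith
    calc ‖x * g x‖ = x * |g x| := by rw [Real.norm_eq_abs, abs_mul, abs_of_pos hx]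
      _ ≤ x * (Real.exp (-(x ^ 2 / 2)) * (|g 0| + A x)) := mul_le_mul_of_nonneg_left h2 hx0
      _ = B x := by rw [hB]; ring
  have hxexp : IntegrableOn (fun x : ℝ => x * Real.exp (-(x ^ 2 / 2))) (Ioi 0) := by
    have hderiv : ∀ x ∈ Ioi (0:ℝ), HasDerivAt (fun y : ℝ => -Real.exp (-(y ^ 2 / 2)))
        (x * Real.exp (-(x ^ 2 / 2))) x := by
      intro x _
      have h4 := ((hasDerivAt_neg_sq x).exp).fun_neg
      refine h4.congr_deriv ?_
      ring
    refine integrableOn_Ioi_deriv_of_nonneg (l := 0) (Continuous.continuousWithinAt hc2.neg)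
      hderiv (fun x hx => mul_nonneg (le_of_lt hx) (Real.exp_pos _).le) ?_
    have h1 : Tendsto (fun x : ℝ => x ^ 2 / 2) atTop atTop :=
      (tendsto_pow_atTop (by norm_num)).atTop_div_const (by norm_num)
    have h2 : Tendsto (fun x : ℝ => Real.exp (-(x ^ 2 / 2))) atTop (𝓝 0) :=
      Real.tendsto_exp_neg_atTop_nhds_zero.comp h1
    have h3 := h2.neg
    rw [neg_zero] at h3
    exact h3
  have hF : IntegrableOn (fun x : ℝ => x * Real.exp (-(x ^ 2 / 2)) * A x) (Ioi 0) := by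
    set F : ℝ → ℝ := fun x => x * Real.exp (-(x ^ 2 / 2)) * A x with hFdef
    have hFc : Continuous F := (continuous_id.mul hc2).mul hAc
    refine integrableOn_Ioi_of_intervalIntegral_norm_bounded (∫ x, |u x|) 0
      (fun R : ℝ => hFc.integrableOn_Ioc) tendsto_id ?_
    filter_upwards [eventually_ge_atTop (0:ℝ)] with R hR
    simp only [id_eq]
    have hnn : ∀ x ∈ uIcc (0:ℝ) R, ‖F x‖ = F x := by
      intro x hx
      rw [uIcc_of_le hR] at hx
      rw [Real.norm_eq_abs, abs_of_nonneg]
      exact mul_nonneg (mul_nonneg hx.1 (Real.exp_pos _).le) (hAnn x hx.1)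
    rw [intervalIntegral.integral_congr hnn]
    have hΦ : ∀ x ∈ uIcc (0:ℝ) R, HasDerivAt (fun y : ℝ => -(Real.exp (-(y ^ 2 / 2)) * A y))
        (F x - |u x|) x := by
      intro x _
      have h1 := (((hasDerivAt_neg_sq x).exp).fun_mul (hAd x)).fun_neg
      have h6 : Real.exp (-(x ^ 2 / 2)) * (E x * |u x|) = |u x| := by
        rw [hE, ← mul_assoc, ← Real.exp_add]
        norm_num
      rw [h6] at h1
      refine h1.congr_deriv ?_
      rw [hFdef]
      ring
    have hFi : IntervalIntegrable F volume 0 R := hFc.intervalIntegrable 0 R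
    have hui : IntervalIntegrable (fun x => |u x|) volume 0 R := hu_cont.abs.intervalIntegrable 0 R
    have hftc := intervalIntegral.integral_eq_sub_of_hasDerivAt hΦ (hFi.sub hui)
    rw [intervalIntegral.integral_sub hFi hui] at hftc
    have h7 : (∫ x in (0:ℝ)..R, F x) - ∫ x in (0:ℝ)..R, |u x|
        = -(Real.exp (-(R ^ 2 / 2)) * A R) := by
      rw [hftc]; simp [hA0]
    have h8 : (∫ x in (0:ℝ)..R, |u x|) ≤ ∫ x, |u x| := by
      rw [intervalIntegral.integral_of_le hR]
      exact setIntegral_le_integral hu.abs (ae_of_all _ fun x => abs_nonneg _)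
    have h9 : 0 ≤ Real.exp (-(R ^ 2 / 2)) * A R :=
      mul_nonneg (Real.exp_pos _).le (hAnn R hR)
    linarith
  have hBint : IntegrableOn B (Ioi 0) := by
    have hsplit : B = fun x => x * Real.exp (-(x ^ 2 / 2)) * |g 0|
        + x * Real.exp (-(x ^ 2 / 2)) * A x := by
      funext x; rw [hB]; ring
    rw [hsplit]
    exact (hxexp.mul_const _).add hF
  refine Integrable.mono' hBint ((continuous_id.mul hgc).aestronglyMeasurable.restrict) ?_
  exact (ae_restrict_iff' measurableSet_Ioi).2 (ae_of_all _ hbound)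

lemma integrable_id_mul (g u : ℝ → ℝ) (hu_cont : Continuous u)
    (hg : ∀ x, HasDerivAt g (u x - x * g x) x) (hu : Integrable u) :
    Integrable (fun x => x * g x) := by
  have pos := aux_Ioi g u hu_cont hg hu
  have neg : IntegrableOn (fun x => x * g x) (Iio 0) := by
    have hg' : ∀ x, HasDerivAt (fun y => g (-y)) ((-u (-x)) - x * g (-x)) x := by
      intro x
      have h1 := (hg (-x)).comp x (hasDerivAt_neg' x)
      refine h1.congr_deriv ?_
      ring
    have hu' : Integrable (fun x => -u (-x)) := (hu.comp_neg).neg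
    have h2 := aux_Ioi (fun x => g (-x)) (fun x => -u (-x)) (by continuity) hg' hu'
    have h3 : IntegrableOn (fun x => -(x * g (-x))) (Ioi (0:ℝ)) := h2.neg
    have h4 : IntegrableOn ((fun y => y * g y) ∘ Neg.neg) (Ioi (0:ℝ)) := by
      apply h3.congr_fun _ measurableSet_Ioi
      intro x _
      simp [Function.comp]
    have h5 : Ioi (0:ℝ) = Neg.neg ⁻¹' (Iio (0:ℝ)) := by ext x; simp
    rw [h5] at h4
    exact ((Measure.measurePreserving_neg (volume : Measure ℝ)).integrableOn_comp_preimage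
      (Homeomorph.neg ℝ).measurableEmbedding).1 h4
  have ici : IntegrableOn (fun x => x * g x) (Ici 0) := by
    rwa [IntegrableOn, Measure.restrict_congr_set Ioi_ae_eq_Ici] at pos
  rw [← integrableOn_univ, ← Set.Iio_union_Ici (a := (0:ℝ))]
  exact integrableOn_union.2 ⟨neg, ici⟩
end BayesAux

section KeyLemmas

lemma key_int (n : ℕ) (φ : ℝ → ℝ) (hφ : ContDiff ℝ (n : ℕ∞) φ)
    (h₃ : ∀ k ≤ n, Integrable (fun x => iteratedDeriv k φ x * gpdf x)) :
    ∀ m j, m + j ≤ n → Integrable (fun x => Hp m x * (iteratedDeriv j φ x * gpdf x)) := by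
  have hcont : ∀ j ≤ n, Continuous (iteratedDeriv j φ) := fun j hj =>
    hφ.continuous_iteratedDeriv j (by exact_mod_cast Nat.cast_le.mpr hj)
  have hder : ∀ j, j < n → ∀ x, HasDerivAt (iteratedDeriv j φ) (iteratedDeriv (j + 1) φ x) x := by
    intro j hj x
    have hdiff : Differentiable ℝ (iteratedDeriv j φ) :=
      hφ.differentiable_iteratedDeriv j (by exact_mod_cast Nat.cast_lt.mpr hj)
    have h1 := (hdiff x).hasDerivAt
    rwa [← iteratedDeriv_succ] at h1
  intro m
  induction m using Nat.strong_induction_on with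
  | _ m IH =>
    match m with
    | 0 =>
      intro j hj
      simpa [Hp_zero] using h₃ j (by omega)
    | (k + 1) =>
      intro j hj
      have hj1 : j + 1 ≤ n := by omega
      have hkj : k + (j + 1) ≤ n := by omega
      have hk1j : (k - 1) + j ≤ n := by omega
      set g : ℝ → ℝ := fun x => Hp k x * (iteratedDeriv j φ x * gpdf x) with hgdef
      set u : ℝ → ℝ := fun x => (k : ℝ) * (Hp (k - 1) x * (iteratedDeriv j φ x * gpdf x))
        + Hp k x * (iteratedDeriv (j + 1) φ x * gpdf x) with hudef
      have hu_cont : Continuous u := by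
        apply Continuous.add
        · exact continuous_const.mul ((continuous_Hp _).mul
            ((hcont j (by omega)).mul continuous_gpdf))
        · exact (continuous_Hp _).mul ((hcont (j + 1) hj1).mul continuous_gpdf)
      have hu : Integrable u :=
        ((IH (k - 1) (by omega) j hk1j).const_mul _).add (IH k (by omega) (j + 1) hkj)
      have hgd : ∀ x, HasDerivAt g (u x - x * g x) x := by
        intro x
        have h1 := (hasDerivAt_Hp k x).fun_mul
          ((hder j (by omega) x).fun_mul (hasDerivAt_gpdf x))
        refine h1.congr_deriv ?_
        rw [hudef, hgdef]
        simp only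
        ring
      have hxg := integrable_id_mul g u hu_cont hgd hu
      have heq : (fun x => Hp (k + 1) x * (iteratedDeriv j φ x * gpdf x))
          = fun x => x * g x - (k : ℝ) * (Hp (k - 1) x * (iteratedDeriv j φ x * gpdf x)) := by
        funext x
        rw [Hp_succ_eval, hgdef]
        simp only
        ring
      rw [heq]
      exact hxg.sub ((IH (k - 1) (by omega) j hk1j).const_mul _)

lemma key_eq (n : ℕ) (φ : ℝ → ℝ) (hφ : ContDiff ℝ (n : ℕ∞) φ)
    (h₃ : ∀ k ≤ n, Integrable (fun x => iteratedDeriv k φ x * gpdf x)) :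
    ∫ x, Hp n x * (φ x * gpdf x) = ∫ x, iteratedDeriv n φ x * gpdf x := by
  have hder : ∀ j, j < n → ∀ x, HasDerivAt (iteratedDeriv j φ) (iteratedDeriv (j + 1) φ x) x := by
    intro j hj x
    have hdiff : Differentiable ℝ (iteratedDeriv j φ) :=
      hφ.differentiable_iteratedDeriv j (by exact_mod_cast Nat.cast_lt.mpr hj)
    have h1 := (hdiff x).hasDerivAt
    rwa [← iteratedDeriv_succ] at h1
  set T : ℕ → ℝ → ℝ := fun k x => iteratedDeriv k φ x * (Hp (n - k) x * gpdf x) with hT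
  set S : ℝ → ℝ := fun x =>
    ∑ k ∈ Finset.range n, iteratedDeriv k φ x * (Hp (n - (k + 1)) x * gpdf x) with hS
  have hSd : ∀ x, HasDerivAt S (T n x - T 0 x) x := by
    intro x
    have hsummand : ∀ k ∈ Finset.range n,
        HasDerivAt (fun y => iteratedDeriv k φ y * (Hp (n - (k + 1)) y * gpdf y))
          (T (k + 1) x - T k x) x := by
      intro k hk
      rw [Finset.mem_range] at hk
      have h1 := (hder k hk x).fun_mul ((hasDerivAt_Hp (n - (k + 1)) x).fun_mul (hasDerivAt_gpdf x))
      refine h1.congr_deriv ?_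
      rw [hT]
      simp only
      have e1 : n - k = (n - (k + 1)) + 1 := by omega
      rw [e1, Hp_succ_eval]
      ring
    have h2 := HasDerivAt.fun_sum hsummand
    rw [Finset.sum_range_sub (fun k => T k x)] at h2
    exact h2
  have hSd' : ∀ x, HasDerivAt S (iteratedDeriv n φ x * gpdf x - Hp n x * (φ x * gpdf x)) x := by
    intro x
    have h3 := hSd x
    convert h3 using 1
    rw [hT]
    simp only [Nat.sub_self, Nat.sub_zero]
    rw [Hp_zero, iteratedDeriv_zero]
    ring
  have h1 : Integrable (fun x => iteratedDeriv n φ x * gpdf x) := h₃ n le_rfl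
  have h2 : Integrable (fun x => Hp n x * (φ x * gpdf x)) := by
    have h4 := key_int n φ hφ h₃ n 0 (by omega)
    simpa [iteratedDeriv_zero] using h4
  have hSint : Integrable S := by
    rw [hS]
    apply integrable_finset_sum
    intro k hk
    rw [Finset.mem_range] at hk
    have h5 := key_int n φ hφ h₃ (n - (k + 1)) k (by omega)
    have heq : (fun x => iteratedDeriv k φ x * (Hp (n - (k + 1)) x * gpdf x))
        = fun x => Hp (n - (k + 1)) x * (iteratedDeriv k φ x * gpdf x) := by
      funext x; ring
    rw [heq]
    exact h5
  have hz := integral_eq_zero_of_hasDerivAt_of_integrable hSd' (h1.sub h2) hSint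
  rw [integral_sub h1 h2] at hz
  linarith

end KeyLemmas


end HermiteFourierAux

open Set Filter Polynomial in
open scoped ENNReal NNReal Topology in
/-- **Hermite Fourier coefficients in Bayes space.**  For `p = c·exp (-φ)` in Bayes space with
standard normal measure, the Fourier coefficient w.r.t. the `n`-th exponentiated Hermite basis
vector is `αₙ = ⟨hₙ, p⟩ = (1/√(n!))·E_ν[φ⁽ⁿ⁾]`. -/
theorem hermite_fourier_coefficient (n : ℕ) (hn : 1 ≤ n) (c : ℝ) (hc : 0 < c)
    (φ : ℝ → ℝ) (hφ : ContDiff ℝ n φ)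
    (h₁ : Integrable (fun x => (Polynomial.aeval x (Polynomial.hermite n) : ℝ) * φ x)
      (gaussianReal 0 1))
    (h₂ : Integrable φ (gaussianReal 0 1))
    (h₃ : ∀ k ≤ n, Integrable (fun x => iteratedDeriv k φ x) (gaussianReal 0 1)) :
    bip (gaussianReal 0 1) (hermiteBasis n) (fun x => c * Real.exp (-(φ x))) =
      (Real.sqrt (Nat.factorial n))⁻¹ * ∫ x, iteratedDeriv n φ x ∂(gaussianReal 0 1) := by
  set ν := gaussianReal 0 1 with hν
  set s := Real.sqrt (Nat.factorial n) with hs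
  have h₃' : ∀ k ≤ n, Integrable (fun x => iteratedDeriv k φ x * gpdf x) volume := fun k hk =>
    (gauss_integrable_iff _).1 (h₃ k hk)
  have hone : ContDiff ℝ (n : ℕ∞) (fun _ : ℝ => (1 : ℝ)) := contDiff_const
  have h₃one : ∀ k ≤ n,
      Integrable (fun x => iteratedDeriv k (fun _ : ℝ => (1 : ℝ)) x * gpdf x) := by
    intro k _
    match k with
    | 0 => simpa [iteratedDeriv_zero] using integrable_gpdf
    | (m + 1) =>
      rw [iteratedDeriv_const_fun]
      simpa using (integrable_zero ℝ ℝ (volume : Measure ℝ))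
  have hH0 : ∫ x, Hp n x ∂ν = 0 := by
    rw [hν, gauss_integral_eq]
    have hke := key_eq n (fun _ => 1) hone h₃one
    have hzero : iteratedDeriv n (fun _ : ℝ => (1 : ℝ)) = fun _ => 0 := by
      rw [show n = (n - 1) + 1 from by omega, iteratedDeriv_const_fun]
    rw [hzero] at hke
    simpa using hke
  have hHint : Integrable (fun x => Hp n x) ν := by
    rw [hν, gauss_integrable_iff]
    have hki := key_int n (fun _ => 1) hone h₃one n 0 (by omega)
    simpa using hki
  have hHφint : Integrable (fun x => Hp n x * φ x) ν := h₁
  have hkey : ∫ x, Hp n x * φ x ∂ν = ∫ x, iteratedDeriv n φ x ∂ν := by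
    rw [hν, gauss_integral_eq, gauss_integral_eq]
    have hke := key_eq n φ hφ h₃'
    simpa [mul_assoc] using hke
  have e1 : ∀ x : ℝ, Real.log (hermiteBasis n x) = -(s⁻¹ * Hp n x) := by
    intro x
    simp only [hermiteBasis, Real.log_exp]
    rw [div_eq_inv_mul]
    rfl
  have e2 : ∀ x : ℝ, Real.log (c * Real.exp (-(φ x))) = Real.log c - φ x := by
    intro x
    rw [Real.log_mul hc.ne' (Real.exp_ne_zero _), Real.log_exp]
    ring
  have i2 : (∫ x, Real.log (hermiteBasis n x) ∂ν) = 0 := by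
    rw [show (fun x => Real.log (hermiteBasis n x)) = fun x => -(s⁻¹ * Hp n x) from funext e1]
    rw [integral_neg, integral_const_mul, hH0, mul_zero, neg_zero]
  have i1 : (∫ x, Real.log (hermiteBasis n x) * Real.log (c * Real.exp (-(φ x))) ∂ν)
      = s⁻¹ * ∫ x, Hp n x * φ x ∂ν := by
    have e3 : (fun x => Real.log (hermiteBasis n x) * Real.log (c * Real.exp (-(φ x))))
        = fun x => s⁻¹ * (Hp n x * φ x) - (s⁻¹ * Real.log c) * Hp n x := by
      funext x
      rw [e1, e2]
      ring
    rw [e3, integral_sub (hHφint.const_mul _) (hHint.const_mul _), integral_const_mul,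
      integral_const_mul, hH0]
    ring
  unfold bip
  rw [i1, i2, hkey]
  ring
end
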